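/- For every n ≥ 0, one has the expansion in ℂ[x]: xⁿ = Σ_{k=0}^{n} Σ_{1 ≤ i₁ < i₂ < ⋯ < iₖ ≤ n} (∏_{j=1}^{k} ψ(x^{iⱼ − i_{j−1} − 1})) · φ(x^{n − iₖ}) · Aₖ(x), with the conventions i₀ = 0, ψ(x⁰) = φ(x⁰) = 1, and for k = 0 the summand is φ(xⁿ)·A₀. -/

import Mathlib

/-- The one-variable c-free Appell polynomials: `A₀ = 1` and
`Aₙ₊₁ = x·Aₙ − Σ_{j=1}^{n} rⱼ·A_{n+1−j} − s_{n+1}·1`. -/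
noncomputable def cfAppell (r s : ℕ → ℂ) : ℕ → Polynomial ℂ
  | 0 => 1
  | n + 1 =>
      Polynomial.X * cfAppell r s n
        - ∑ j ∈ Finset.range n, Polynomial.C (r (j + 1)) * cfAppell r s (n - j)
        - Polynomial.C (s (n + 1))
  termination_by n => n
  decreasing_by all_goals omega

/-- Substitution `Σ_{k≥1} rₖ·gᵏ` of a power series `g` with zero constant term into the
series `R(z) = Σ_{k≥1} rₖ zᵏ`, computed coefficientwise (for such `g`, the coefficient
of `wⁿ` in `Σ_{k≥1} rₖ gᵏ` is the finite sum `Σ_{k=1}^{n} rₖ·(coeff of wⁿ in gᵏ)`). -/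
noncomputable def substSeries (r : ℕ → ℂ) (g : PowerSeries ℂ) : PowerSeries ℂ :=
  PowerSeries.mk fun n => ∑ k ∈ Finset.Icc 1 n, r k * PowerSeries.coeff n (g ^ k)

/-- `gapProd ψp prev [i₁, …, iₖ] = ∏_{j=1}^{k} ψp (iⱼ − i_{j−1} − 1)` with `i₀ = prev`. -/
def gapProd (ψp : ℕ → ℂ) : ℕ → List ℕ → ℂ
  | _, [] => 1
  | prev, i :: t => ψp (i - prev - 1) * gapProd ψp i t

namespace CFProof
open PowerSeries Finset

lemma gapProd_append (ψp : ℕ → ℂ) :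
    ∀ (l : List ℕ) (p a : ℕ),
      gapProd ψp p (l ++ [a]) = gapProd ψp p l * ψp (a - l.getLastD p - 1)
  | [], p, a => by simp [gapProd]
  | h :: t, p, a => by
    show ψp (h - p - 1) * gapProd ψp h (t ++ [a]) = _
    rw [gapProd_append ψp t h a]
    simp only [gapProd, List.getLastD_cons, mul_assoc]

lemma sorted_append_singleton {l : List ℕ} {a : ℕ} (h : List.Pairwise (· ≤ ·) l)
    (h2 : ∀ x ∈ l, x ≤ a) : List.Pairwise (· ≤ ·) (l ++ [a]) := by
  rw [List.pairwise_append]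
  exact ⟨h, by simp, by simpa using h2⟩

lemma sort_insert_max {B : Finset ℕ} {a : ℕ} (h : ∀ x ∈ B, x ≤ a) (ha : a ∉ B) :
    (insert a B).sort (· ≤ ·) = B.sort (· ≤ ·) ++ [a] := by
  refine List.Perm.eq_of_pairwise' (Finset.pairwise_sort _ _)
    (sorted_append_singleton (Finset.pairwise_sort _ _)
      (fun x hx => h x ((Finset.mem_sort (· ≤ ·)).mp hx))) ?_
  rw [← Multiset.coe_eq_coe]
  show ((insert a B).sort (· ≤ ·) : Multiset ℕ) = ((B.sort (· ≤ ·) ++ [a] : List ℕ) : Multiset ℕ)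
  have h2 : ((B.sort (· ≤ ·) ++ [a] : List ℕ) : Multiset ℕ)
      = (B.sort (· ≤ ·) : Multiset ℕ) + ([a] : List ℕ) := by
    exact_mod_cast rfl
  rw [Finset.sort_eq, h2, Finset.sort_eq, Finset.insert_val_of_notMem ha]
  rw [add_comm]; rfl

lemma getLastD_sort_eq_sup (B : Finset ℕ) : (B.sort (· ≤ ·)).getLastD 0 = B.sup id := by
  rcases B.eq_empty_or_nonempty with rfl | h
  · simp
  · have h1 : (B.sort (· ≤ ·)) = ((B.erase (B.max' h)).sort (· ≤ ·)) ++ [B.max' h] := by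
      conv_lhs => rw [← Finset.insert_erase (B.max'_mem h)]
      exact sort_insert_max (fun x hx => B.le_max' x (Finset.mem_of_mem_erase hx))
        (Finset.notMem_erase _ _)
    rw [h1, List.getLastD_concat]
    rw [show B.sup id = B.sup' h id from (Finset.sup'_eq_sup h id).symm, ← Finset.max'_eq_sup']


noncomputable def aa (M : PowerSeries ℂ) (n k : ℕ) : ℂ :=
  PowerSeries.coeff n ((PowerSeries.X * (1 + M)) ^ k)

noncomputable def ee (M : PowerSeries ℂ) (n k : ℕ) : ℂ :=
  PowerSeries.coeff n ((PowerSeries.X * (1 + M)) ^ k * (1 + M))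

lemma aa_def (M : PowerSeries ℂ) (n k : ℕ) :
    aa M n k = PowerSeries.coeff n ((PowerSeries.X * (1 + M)) ^ k) := rfl

lemma ee_def (M : PowerSeries ℂ) (n k : ℕ) :
    ee M n k = PowerSeries.coeff n ((PowerSeries.X * (1 + M)) ^ k * (1 + M)) := rfl

lemma aa_eq_zero (M : PowerSeries ℂ) {n k : ℕ} (h : n < k) : aa M n k = 0 := by
  have hd : (PowerSeries.X : PowerSeries ℂ) ^ k ∣ (PowerSeries.X * (1 + M)) ^ k :=
    pow_dvd_pow_of_dvd ⟨1 + M, rfl⟩ k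
  exact PowerSeries.X_pow_dvd_iff.mp hd n h

lemma ee_eq_zero (M : PowerSeries ℂ) {n k : ℕ} (h : n < k) : ee M n k = 0 := by
  have hd : (PowerSeries.X : PowerSeries ℂ) ^ k ∣ (PowerSeries.X * (1 + M)) ^ k * (1 + M) :=
    Dvd.dvd.mul_right (pow_dvd_pow_of_dvd ⟨1 + M, rfl⟩ k) _
  exact PowerSeries.X_pow_dvd_iff.mp hd n h

lemma aa_succ (M : PowerSeries ℂ) (n k : ℕ) : aa M (n+1) (k+1) = ee M n k := by
  have hg : (PowerSeries.X * (1 + M)) ^ (k+1)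
      = PowerSeries.X * ((PowerSeries.X * (1 + M)) ^ k * (1 + M)) := by ring
  rw [aa_def, hg, PowerSeries.coeff_succ_X_mul, ee_def]

lemma aa_succ_zero (M : PowerSeries ℂ) (n : ℕ) : aa M (n+1) 0 = 0 := by
  simp [aa_def, PowerSeries.coeff_one]

lemma aa_zero_zero (M : PowerSeries ℂ) : aa M 0 0 = 1 := by
  simp [aa_def]

lemma ee_eq_sum (M : PowerSeries ℂ) (ψp : ℕ → ℂ)
    (hψ : ∀ m, ψp m = PowerSeries.coeff m (1 + M)) (n k : ℕ) :
    ee M n k = ∑ j ∈ range (n+1), aa M j k * ψp (n - j) := by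
  rw [ee_def, PowerSeries.coeff_mul, Finset.Nat.sum_antidiagonal_eq_sum_range_succ_mk]
  exact Finset.sum_congr rfl fun j hj => by rw [hψ (n - j), aa_def]

lemma sum_Icc_one {α : Type*} [AddCommMonoid α] (f : ℕ → α) (N : ℕ) :
    ∑ t ∈ Icc 1 N, f t = ∑ j ∈ range N, f (j+1) := by
  induction N with
  | zero => simp
  | succ N ih =>
    rw [show Icc 1 (N+1) = insert (N+1) (Icc 1 N) from by ext x; simp [Finset.mem_Icc]; omega,
      Finset.sum_insert (by simp [Finset.mem_Icc]), Finset.sum_range_succ, ih, add_comm]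

lemma coeff_mul_subst (M : PowerSeries ℂ) (c : ℕ → ℂ) (k N : ℕ) :
    PowerSeries.coeff N ((PowerSeries.X * (1 + M)) ^ k
        * substSeries c (PowerSeries.X * (1 + M))) = ∑ t ∈ Icc 1 N, c t * aa M N (k+t) := by
  rw [PowerSeries.coeff_mul, Finset.Nat.sum_antidiagonal_eq_sum_range_succ_mk]
  have h1 : ∀ i ∈ range (N+1),
      PowerSeries.coeff i ((PowerSeries.X * (1 + M)) ^ k)
        * PowerSeries.coeff (N - i) (substSeries c (PowerSeries.X * (1 + M)))
      = ∑ t ∈ Icc 1 N, aa M i k * (c t * aa M (N - i) t) := by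
    intro i hi
    rw [substSeries, PowerSeries.coeff_mk, Finset.mul_sum]
    rw [Finset.sum_subset (Finset.Icc_subset_Icc_right (Nat.sub_le N i))]
    · exact Finset.sum_congr rfl fun t ht => by rw [aa_def, aa_def]
    · intro t ht hnt
      have h2 : N - i < t := by
        simp only [Finset.mem_Icc] at ht hnt; omega
      simp only [← aa_def]
      rw [aa_eq_zero M h2]; ring
  rw [Finset.sum_congr rfl h1, Finset.sum_comm]
  refine Finset.sum_congr rfl fun t ht => ?_
  have h3 : ∑ i ∈ range (N+1), aa M i k * (c t * aa M (N - i) t)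
      = c t * ∑ i ∈ range (N+1), aa M i k * aa M (N - i) t := by
    rw [Finset.mul_sum]; exact Finset.sum_congr rfl fun i _ => by ring
  rw [h3]
  congr 1
  have h4 : aa M N (k + t) = ∑ p ∈ Finset.HasAntidiagonal.antidiagonal N,
      PowerSeries.coeff p.1 ((PowerSeries.X * (1 + M)) ^ k)
        * PowerSeries.coeff p.2 ((PowerSeries.X * (1 + M)) ^ t) := by
    rw [aa_def, pow_add, PowerSeries.coeff_mul]
  rw [h4, Finset.Nat.sum_antidiagonal_eq_sum_range_succ_mk]
  exact Finset.sum_congr rfl fun i _ => by rw [aa_def, aa_def]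

lemma cfAppell_zero (r s : ℕ → ℂ) : cfAppell r s 0 = 1 := by rw [cfAppell]

lemma X_mul_cfAppell (r s : ℕ → ℂ) (k : ℕ) :
    Polynomial.X * cfAppell r s k
      = cfAppell r s (k+1) + (∑ j ∈ range k, Polynomial.C (r (j+1)) * cfAppell r s (k - j))
        + Polynomial.C (s (k+1)) := by
  rw [cfAppell]; ring

lemma sum_aa_succ' (M : PowerSeries ℂ) (n : ℕ) (G : ℕ → Polynomial ℂ) :
    ∑ k ∈ range (n+2), aa M (n+1) k • G k = ∑ k ∈ range (n+1), ee M n k • G (k+1) := by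
  rw [Finset.sum_range_succ' (fun k => aa M (n+1) k • G k) (n+1), aa_succ_zero, zero_smul, add_zero]
  exact Finset.sum_congr rfl fun k _ => by rw [aa_succ]

noncomputable def Ep (r s : ℕ → ℂ) (M : PowerSeries ℂ) (m : ℕ) : Polynomial ℂ :=
  ∑ k ∈ range (m+1), ee M m k • cfAppell r s k

lemma Ep_zero (r s : ℕ → ℂ) (M : PowerSeries ℂ) (hM0 : PowerSeries.constantCoeff M = 0) :
    Ep r s M 0 = 1 := by
  have h : ee M 0 0 = 1 := by
    rw [ee_def, pow_zero, one_mul]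
    simp [PowerSeries.coeff_zero_eq_constantCoeff, hM0]
  simp [Ep, h, cfAppell_zero]

lemma Ep_succ (r s : ℕ → ℂ) (M : PowerSeries ℂ)
    (hM : M = substSeries r (PowerSeries.X * (1 + M))) (m : ℕ) :
    Ep r s M (m+1) = Polynomial.X * Ep r s M m
      + Polynomial.C (∑ k ∈ range (m+1), (r (k+1) - s (k+1)) * ee M m k) := by
  classical
  have hee : ∀ k, ee M (m+1) k
      = aa M (m+1) k + ∑ j ∈ range (m+1), r (j+1) * aa M (m+1) (k + (j+1)) := by
    intro k
    have hsplit : (PowerSeries.X * (1 + M)) ^ k * (1 + M)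
        = (PowerSeries.X * (1 + M)) ^ k + (PowerSeries.X * (1 + M)) ^ k * M := by ring
    rw [ee_def, hsplit, map_add, ← aa_def]
    congr 1
    rw [congrArg (fun z => (PowerSeries.X * (1 + M)) ^ k * z) hM, coeff_mul_subst, sum_Icc_one]
  have hEp1 : Ep r s M (m+1)
      = (∑ k ∈ range (m+2), aa M (m+1) k • cfAppell r s k)
        + ∑ k ∈ range (m+2), ∑ j ∈ range (m+1),
            (r (j+1) * ee M m (k + j)) • cfAppell r s k := by
    rw [Ep]
    rw [Finset.sum_congr rfl fun k (_ : k ∈ range (m+2)) => by rw [hee k, add_smul]]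
    rw [Finset.sum_add_distrib]
    congr 1
    refine Finset.sum_congr rfl fun k _ => ?_
    rw [Finset.sum_smul]
    refine Finset.sum_congr rfl fun j _ => ?_
    rw [show k + (j+1) = (k+j)+1 from rfl, aa_succ]
  have hsq : (∑ k ∈ range (m+2), ∑ j ∈ range (m+1),
      (r (j+1) * ee M m (k + j)) • cfAppell r s k)
      = ∑ k ∈ range (m+1), ∑ j ∈ range (k+1),
          (ee M m k * r (j+1)) • cfAppell r s (k - j) := by
    rw [Finset.sum_sigma' (range (m+2)) (fun _ => range (m+1))
      (fun k j => (r (j+1) * ee M m (k + j)) • cfAppell r s k)]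
    rw [Finset.sum_sigma' (range (m+1)) (fun k => range (k+1))
      (fun k j => (ee M m k * r (j+1)) • cfAppell r s (k - j))]
    rw [← Finset.sum_filter_of_ne (p := fun p : (_ : ℕ) × ℕ => p.1 + p.2 ≤ m)
      (fun x _ hne => by
        by_contra hgt
        exact hne (by rw [ee_eq_zero M (show m < x.1 + x.2 by omega)]; simp))]
    refine Finset.sum_nbij' (fun p => ⟨p.1 + p.2, p.2⟩) (fun q => ⟨q.1 - q.2, q.2⟩)
      ?_ ?_ ?_ ?_ ?_
    · rintro ⟨a, b⟩ hp
      dsimp only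
      simp only [Finset.mem_filter, Finset.mem_sigma, Finset.mem_range] at *
      omega
    · rintro ⟨a, b⟩ hq
      dsimp only
      simp only [Finset.mem_filter, Finset.mem_sigma, Finset.mem_range] at *
      omega
    · rintro ⟨a, b⟩ hp
      dsimp only
      simp
    · rintro ⟨a, b⟩ hq
      simp only [Finset.mem_sigma, Finset.mem_range] at hq
      dsimp only
      have : a - b + b = a := by omega
      simp [this]
    · rintro ⟨a, b⟩ hp
      simp only [Finset.mem_filter, Finset.mem_sigma, Finset.mem_range] at hp
      dsimp only
      rw [mul_comm]
      congr 2
      omega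
  have hterm : ∀ k, Polynomial.X * (ee M m k • cfAppell r s k)
      = ee M m k • cfAppell r s (k+1)
        + (∑ j ∈ range k, (ee M m k * r (j+1)) • cfAppell r s (k - j))
        + (ee M m k * s (k+1)) • (1 : Polynomial ℂ) := by
    intro k
    rw [mul_smul_comm, X_mul_cfAppell, smul_add, smul_add]
    congr 1
    · congr 1
      rw [Finset.smul_sum]
      refine Finset.sum_congr rfl fun j _ => ?_
      rw [← Polynomial.smul_eq_C_mul, smul_smul]
    · rw [Polynomial.smul_eq_C_mul, Polynomial.smul_eq_C_mul, map_mul, mul_one]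
  have hTexp : (∑ k ∈ range (m+1), ∑ j ∈ range (k+1),
        (ee M m k * r (j+1)) • cfAppell r s (k - j))
      = (∑ k ∈ range (m+1), ∑ j ∈ range k, (ee M m k * r (j+1)) • cfAppell r s (k - j))
        + ∑ k ∈ range (m+1), (ee M m k * r (k+1)) • (1 : Polynomial ℂ) := by
    rw [← Finset.sum_add_distrib]
    refine Finset.sum_congr rfl fun k _ => ?_
    rw [Finset.sum_range_succ, Nat.sub_self, cfAppell_zero]
  have hC : Polynomial.C (∑ k ∈ range (m+1), (r (k+1) - s (k+1)) * ee M m k)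
      = ∑ k ∈ range (m+1), ((r (k+1) - s (k+1)) * ee M m k) • (1 : Polynomial ℂ) := by
    rw [map_sum]
    exact Finset.sum_congr rfl fun k _ => by rw [Polynomial.smul_eq_C_mul, mul_one]
  have hXE : Polynomial.X * Ep r s M m
      = (∑ k ∈ range (m+1), ee M m k • cfAppell r s (k+1))
        + (∑ k ∈ range (m+1), ∑ j ∈ range k, (ee M m k * r (j+1)) • cfAppell r s (k - j))
        + ∑ k ∈ range (m+1), (ee M m k * s (k+1)) • (1 : Polynomial ℂ) := by
    rw [Ep, Finset.mul_sum]
    rw [Finset.sum_congr rfl fun k (_ : k ∈ range (m+1)) => hterm k]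
    rw [Finset.sum_add_distrib, Finset.sum_add_distrib]
  have hcomb : (∑ k ∈ range (m+1), (ee M m k * s (k+1)) • (1 : Polynomial ℂ))
      + ∑ k ∈ range (m+1), ((r (k+1) - s (k+1)) * ee M m k) • (1 : Polynomial ℂ)
      = ∑ k ∈ range (m+1), (ee M m k * r (k+1)) • (1 : Polynomial ℂ) := by
    rw [← Finset.sum_add_distrib]
    refine Finset.sum_congr rfl fun k _ => ?_
    rw [← add_smul]
    congr 1
    ring
  rw [hEp1, hsq, sum_aa_succ', hTexp, hXE, hC]
  rw [add_assoc (∑ k ∈ range (m+1), ee M m k • cfAppell r s (k+1)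
    + ∑ k ∈ range (m+1), ∑ j ∈ range k, (ee M m k * r (j+1)) • cfAppell r s (k - j)), hcomb]
  abel

noncomputable def thf (M η : PowerSeries ℂ) (j : ℕ) : ℂ :=
  PowerSeries.coeff j ((1 + M)⁻¹ * (1 - η)⁻¹)

noncomputable def uuf (M η : PowerSeries ℂ) (j : ℕ) : ℂ :=
  PowerSeries.coeff j ((1 + M) * (1 - η))

lemma constC_oneAdd (M : PowerSeries ℂ) (hM0 : PowerSeries.constantCoeff M = 0) :
    PowerSeries.constantCoeff (1 + M) = 1 := by simp [hM0]

lemma h1M (M : PowerSeries ℂ) (hM0 : PowerSeries.constantCoeff M = 0) :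
    (1 + M) * (1 + M)⁻¹ = 1 :=
  PowerSeries.mul_inv_cancel _ (by rw [constC_oneAdd M hM0]; exact one_ne_zero)

lemma subst_const (c : ℕ → ℂ) (g : PowerSeries ℂ) :
    PowerSeries.constantCoeff (substSeries c g) = 0 := by
  rw [substSeries, ← PowerSeries.coeff_zero_eq_constantCoeff_apply, PowerSeries.coeff_mk,
    Finset.Icc_eq_empty (by omega), Finset.sum_empty]

lemma eta_const (s : ℕ → ℂ) (M η : PowerSeries ℂ)
    (hη : η = (1 + M)⁻¹ * substSeries s (PowerSeries.X * (1 + M))) :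
    PowerSeries.constantCoeff η = 0 := by
  rw [hη, map_mul, subst_const, mul_zero]

lemma oneSubEta_const (s : ℕ → ℂ) (M η : PowerSeries ℂ)
    (hη : η = (1 + M)⁻¹ * substSeries s (PowerSeries.X * (1 + M))) :
    PowerSeries.constantCoeff (1 - η) = 1 := by
  rw [map_sub, map_one, eta_const s M η hη, sub_zero]

lemma h1E (s : ℕ → ℂ) (M η : PowerSeries ℂ)
    (hη : η = (1 + M)⁻¹ * substSeries s (PowerSeries.X * (1 + M))) :
    (1 - η) * (1 - η)⁻¹ = 1 :=
  PowerSeries.mul_inv_cancel _ (by rw [oneSubEta_const s M η hη]; exact one_ne_zero)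

lemma th_zero (s : ℕ → ℂ) (M η : PowerSeries ℂ)
    (hM0 : PowerSeries.constantCoeff M = 0)
    (hη : η = (1 + M)⁻¹ * substSeries s (PowerSeries.X * (1 + M))) :
    thf M η 0 = 1 := by
  rw [thf, PowerSeries.coeff_zero_eq_constantCoeff_apply, map_mul,
    PowerSeries.constantCoeff_inv, PowerSeries.constantCoeff_inv,
    constC_oneAdd M hM0, oneSubEta_const s M η hη]
  norm_num

lemma uu_zero (s : ℕ → ℂ) (M η : PowerSeries ℂ)
    (hM0 : PowerSeries.constantCoeff M = 0)
    (hη : η = (1 + M)⁻¹ * substSeries s (PowerSeries.X * (1 + M))) :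
    uuf M η 0 = 1 := by
  rw [uuf, PowerSeries.coeff_zero_eq_constantCoeff_apply, map_mul,
    constC_oneAdd M hM0, oneSubEta_const s M η hη]
  norm_num

lemma th_mul_uu (s : ℕ → ℂ) (M η : PowerSeries ℂ)
    (hM0 : PowerSeries.constantCoeff M = 0)
    (hη : η = (1 + M)⁻¹ * substSeries s (PowerSeries.X * (1 + M))) (n : ℕ) :
    ∑ i ∈ range (n+2), thf M η i * uuf M η (n+1-i) = 0 := by
  have hprod : ((1 + M)⁻¹ * (1 - η)⁻¹) * ((1 + M) * (1 - η)) = 1 := by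
    calc ((1 + M)⁻¹ * (1 - η)⁻¹) * ((1 + M) * (1 - η))
        = ((1 + M) * (1 + M)⁻¹) * ((1 - η) * (1 - η)⁻¹) := by ring
      _ = 1 := by rw [h1M M hM0, h1E s M η hη, one_mul]
  have h2 : PowerSeries.coeff (n+1) (((1 + M)⁻¹ * (1 - η)⁻¹) * ((1 + M) * (1 - η))) = 0 := by
    rw [hprod]
    simp [PowerSeries.coeff_one]
  rw [PowerSeries.coeff_mul, Finset.Nat.sum_antidiagonal_eq_sum_range_succ_mk] at h2
  exact h2

lemma coeff_M_eq (r : ℕ → ℂ) (M : PowerSeries ℂ)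
    (hM : M = substSeries r (PowerSeries.X * (1 + M))) (N : ℕ) :
    PowerSeries.coeff N M = ∑ t ∈ Icc 1 N, r t * aa M N t := by
  conv_lhs => rw [hM]
  rw [substSeries, PowerSeries.coeff_mk]
  exact Finset.sum_congr rfl fun t _ => by rw [aa_def]

lemma uu_succ (r s : ℕ → ℂ) (M η : PowerSeries ℂ)
    (hM0 : PowerSeries.constantCoeff M = 0)
    (hM : M = substSeries r (PowerSeries.X * (1 + M)))
    (hη : η = (1 + M)⁻¹ * substSeries s (PowerSeries.X * (1 + M))) (j : ℕ) :
    uuf M η (j+1) = ∑ k ∈ range (j+1), (r (k+1) - s (k+1)) * ee M j k := by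
  have hS : (1 + M) * η = substSeries s (PowerSeries.X * (1 + M)) := by
    rw [hη, ← mul_assoc, h1M M hM0, one_mul]
  have hexp : (1 + M) * (1 - η) = (1 + M) - substSeries s (PowerSeries.X * (1 + M)) := by
    rw [mul_one_sub, hS]
  rw [uuf, hexp, map_sub, map_add, PowerSeries.coeff_one]
  rw [coeff_M_eq r M hM, substSeries, PowerSeries.coeff_mk]
  simp only [Nat.succ_ne_zero, if_false, zero_add]
  rw [← Finset.sum_sub_distrib]
  simp only [← aa_def]
  rw [Finset.sum_congr rfl fun t (_ : t ∈ Icc 1 (j+1)) => (by ring :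
    r t * aa M (j+1) t - s t * aa M (j+1) t = (r t - s t) * aa M (j+1) t)]
  rw [sum_Icc_one (fun t => (r t - s t) * aa M (j+1) t) (j+1)]
  exact Finset.sum_congr rfl fun k _ => by rw [aa_succ]

lemma xpow (r s : ℕ → ℂ) (M η : PowerSeries ℂ)
    (hM0 : PowerSeries.constantCoeff M = 0)
    (hM : M = substSeries r (PowerSeries.X * (1 + M)))
    (hη : η = (1 + M)⁻¹ * substSeries s (PowerSeries.X * (1 + M))) (n : ℕ) :
    (Polynomial.X : Polynomial ℂ) ^ n = ∑ j ∈ range (n+1), thf M η (n-j) • Ep r s M j := by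
  induction n with
  | zero =>
    simp [th_zero s M η hM0 hη, Ep_zero r s M hM0]
  | succ n ih =>
    have hscal : (∑ j ∈ range (n+1), thf M η (n-j) * uuf M η (j+1)) + thf M η (n+1) = 0 := by
      have h := th_mul_uu s M η hM0 hη n
      rw [Finset.sum_range_succ, Nat.sub_self, uu_zero s M η hM0 hη, mul_one] at h
      rw [← h]
      congr 1
      rw [← Finset.sum_range_reflect (fun i => thf M η i * uuf M η (n+1-i)) (n+1)]
      refine Finset.sum_congr rfl fun j hj => ?_
      have hj' := Finset.mem_range.mp hj
      have e1 : n + 1 - 1 - j = n - j := by omega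
      have e2 : n + 1 - (n - j) = j + 1 := by omega
      rw [e1, e2]
    rw [Finset.sum_range_succ' (fun j => thf M η (n+1-j) • Ep r s M j) (n+1)]
    simp only [Nat.succ_sub_succ_eq_sub, Nat.sub_zero]
    rw [Finset.sum_congr rfl fun j (_ : j ∈ range (n+1)) => by
      rw [Ep_succ r s M hM j, ← uu_succ r s M η hM0 hM hη j, smul_add]]
    rw [Finset.sum_add_distrib, Ep_zero r s M hM0]
    have h1 : ∑ j ∈ range (n+1), thf M η (n-j) • (Polynomial.X * Ep r s M j)
        = Polynomial.X * ∑ j ∈ range (n+1), thf M η (n-j) • Ep r s M j := by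
      rw [Finset.mul_sum]
      exact Finset.sum_congr rfl fun j _ => (mul_smul_comm _ _ _).symm
    have h2 : (∑ j ∈ range (n+1), thf M η (n-j) • Polynomial.C (uuf M η (j+1)))
        + thf M η (n+1) • (1 : Polynomial ℂ)
        = Polynomial.C ((∑ j ∈ range (n+1), thf M η (n-j) * uuf M η (j+1)) + thf M η (n+1)) := by
      rw [map_add, map_sum]
      congr 1
      · exact Finset.sum_congr rfl fun j _ => by
          rw [Polynomial.smul_eq_C_mul, map_mul]
      · rw [Polynomial.smul_eq_C_mul, mul_one]
    rw [h1, ← ih, add_assoc, h2, hscal, map_zero, add_zero]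
    rw [pow_succ]
    ring

lemma gapProd_nil (ψp : ℕ → ℂ) (p : ℕ) : gapProd ψp p [] = 1 := rfl

noncomputable def pp (r s : ℕ → ℂ) (M : PowerSeries ℂ) (ψp : ℕ → ℂ) (c n m : ℕ) :
    Polynomial ℂ :=
  ∑ k ∈ range (n+1), (∑ j ∈ range (n+1), aa M j k * ψp (m - j)) • cfAppell r s (k + c)

noncomputable def qq (r s : ℕ → ℂ) (M : PowerSeries ℂ) (φp : ℕ → ℂ) (n m : ℕ) :
    Polynomial ℂ :=
  ∑ k ∈ range (n+1), (∑ j ∈ range (n+1), aa M j k * φp (m - j)) • cfAppell r s k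

lemma sum_aa_succψ (M : PowerSeries ℂ) (ψp : ℕ → ℂ)
    (hψ : ∀ m, ψp m = PowerSeries.coeff m (1 + M)) (n : ℕ) (G : ℕ → Polynomial ℂ) :
    ∑ k ∈ range (n+2), aa M (n+1) k • G k
      = ∑ k ∈ range (n+1), (∑ j ∈ range (n+1), aa M j k * ψp (n - j)) • G (k+1) := by
  rw [sum_aa_succ']
  exact Finset.sum_congr rfl fun k _ => by rw [ee_eq_sum M ψp hψ]

lemma pp_rec (r s : ℕ → ℂ) (M : PowerSeries ℂ) (ψp : ℕ → ℂ)
    (hψ : ∀ m, ψp m = PowerSeries.coeff m (1 + M)) (c n m : ℕ) :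
    pp r s M ψp c (n+1) m = pp r s M ψp c n m + ψp (m - (n+1)) • pp r s M ψp (c+1) n n := by
  rw [pp]
  rw [Finset.sum_congr rfl fun k (_ : k ∈ range (n+2)) => by
    rw [Finset.sum_range_succ (fun j => aa M j k * ψp (m - j)) (n+1), add_smul]]
  rw [Finset.sum_add_distrib]
  congr 1
  · rw [Finset.sum_range_succ]
    have hz : (∑ j ∈ range (n+1), aa M j (n+1) * ψp (m - j)) = 0 :=
      Finset.sum_eq_zero fun j hj => by
        rw [aa_eq_zero M (Finset.mem_range.mp hj)]; ring
    rw [hz, zero_smul, add_zero, pp]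
  · rw [Finset.sum_congr rfl fun k (_ : k ∈ range (n+2)) =>
      (by rw [mul_comm, mul_smul] :
        (aa M (n+1) k * ψp (m - (n+1))) • cfAppell r s (k + c)
          = ψp (m - (n+1)) • (aa M (n+1) k • cfAppell r s (k + c)))]
    rw [← Finset.smul_sum]
    congr 1
    rw [sum_aa_succψ M ψp hψ n (fun k => cfAppell r s (k + c)), pp]
    refine Finset.sum_congr rfl fun k _ => ?_
    have h : k + 1 + c = k + (c + 1) := by omega
    rw [h]

lemma qq_rec (r s : ℕ → ℂ) (M : PowerSeries ℂ) (ψp φp : ℕ → ℂ)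
    (hψ : ∀ m, ψp m = PowerSeries.coeff m (1 + M)) (n m : ℕ) :
    qq r s M φp (n+1) m = qq r s M φp n m + φp (m - (n+1)) • pp r s M ψp 1 n n := by
  rw [qq]
  rw [Finset.sum_congr rfl fun k (_ : k ∈ range (n+2)) => by
    rw [Finset.sum_range_succ (fun j => aa M j k * φp (m - j)) (n+1), add_smul]]
  rw [Finset.sum_add_distrib]
  congr 1
  · rw [Finset.sum_range_succ]
    have hz : (∑ j ∈ range (n+1), aa M j (n+1) * φp (m - j)) = 0 :=
      Finset.sum_eq_zero fun j hj => by
        rw [aa_eq_zero M (Finset.mem_range.mp hj)]; ring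
    rw [hz, zero_smul, add_zero, qq]
  · rw [Finset.sum_congr rfl fun k (_ : k ∈ range (n+2)) =>
      (by rw [mul_comm, mul_smul] :
        (aa M (n+1) k * φp (m - (n+1))) • cfAppell r s k
          = φp (m - (n+1)) • (aa M (n+1) k • cfAppell r s k))]
    rw [← Finset.smul_sum]
    congr 1
    rw [sum_aa_succψ M ψp hψ n (fun k => cfAppell r s k), pp]

lemma partI_P (r s ψp : ℕ → ℂ) (M : PowerSeries ℂ)
    (hψ : ∀ m, ψp m = PowerSeries.coeff m (1 + M)) :
    ∀ (n c m : ℕ),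
      (∑ B ∈ (Icc 1 n).powerset,
        (gapProd ψp 0 (B.sort (· ≤ ·)) * ψp (m - B.sup id)) • cfAppell r s (B.card + c))
        = pp r s M ψp c n m := by
  intro n
  induction n with
  | zero =>
    intro c m
    rw [show Icc 1 0 = (∅ : Finset ℕ) from Finset.Icc_eq_empty (by omega)]
    simp [pp, aa_zero_zero, gapProd_nil]
  | succ n ih =>
    intro c m
    rw [show Icc 1 (n+1) = insert (n+1) (Icc 1 n) from by ext x; simp [Finset.mem_Icc]; omega]
    rw [Finset.sum_powerset_insert (by simp [Finset.mem_Icc])]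
    rw [ih c m, pp_rec r s M ψp hψ c n m]
    congr 1
    have hpt : ∀ B ∈ (Icc 1 n).powerset,
        (gapProd ψp 0 ((insert (n+1) B).sort (· ≤ ·))
            * ψp (m - (insert (n+1) B).sup id)) • cfAppell r s ((insert (n+1) B).card + c)
        = ψp (m - (n+1)) • ((gapProd ψp 0 (B.sort (· ≤ ·)) * ψp (n - B.sup id))
            • cfAppell r s (B.card + (c+1))) := by
      intro B hB
      have hBsub := Finset.mem_powerset.mp hB
      have hle : ∀ x ∈ B, x ≤ n := fun x hx => (Finset.mem_Icc.mp (hBsub hx)).2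
      have hnot : (n+1) ∉ B := fun h => by have := hle _ h; omega
      have hsort := sort_insert_max (B := B) (a := n+1)
        (fun x hx => by have := hle x hx; omega) hnot
      have hsup : (insert (n+1) B).sup id = n+1 := by
        rw [Finset.sup_insert]
        have hb : B.sup id ≤ n+1 := Finset.sup_le fun x hx => by
          have := hle x hx; simp only [id]; omega
        simpa using sup_eq_left.mpr hb
      have hcard : (insert (n+1) B).card = B.card + 1 := Finset.card_insert_of_notMem hnot
      rw [hsort, hcard, hsup, gapProd_append, getLastD_sort_eq_sup]
      rw [show n + 1 - B.sup id - 1 = n - B.sup id from by omega]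
      rw [smul_smul]
      congr 1
      · ring
      · congr 1
        omega
    rw [Finset.sum_congr rfl hpt, ← Finset.smul_sum, ih (c+1) n]

lemma partI_Q (r s ψp φp : ℕ → ℂ) (M : PowerSeries ℂ)
    (hψ : ∀ m, ψp m = PowerSeries.coeff m (1 + M)) :
    ∀ (n m : ℕ),
      (∑ B ∈ (Icc 1 n).powerset,
        (gapProd ψp 0 (B.sort (· ≤ ·)) * φp (m - B.sup id)) • cfAppell r s B.card)
        = qq r s M φp n m := by
  intro n
  induction n with
  | zero =>
    intro m
    rw [show Icc 1 0 = (∅ : Finset ℕ) from Finset.Icc_eq_empty (by omega)]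
    simp [qq, aa_zero_zero, gapProd_nil]
  | succ n ih =>
    intro m
    rw [show Icc 1 (n+1) = insert (n+1) (Icc 1 n) from by ext x; simp [Finset.mem_Icc]; omega]
    rw [Finset.sum_powerset_insert (by simp [Finset.mem_Icc])]
    rw [ih m, qq_rec r s M ψp φp hψ n m]
    congr 1
    have hpt : ∀ B ∈ (Icc 1 n).powerset,
        (gapProd ψp 0 ((insert (n+1) B).sort (· ≤ ·))
            * φp (m - (insert (n+1) B).sup id)) • cfAppell r s (insert (n+1) B).card
        = φp (m - (n+1)) • ((gapProd ψp 0 (B.sort (· ≤ ·)) * ψp (n - B.sup id))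
            • cfAppell r s (B.card + 1)) := by
      intro B hB
      have hBsub := Finset.mem_powerset.mp hB
      have hle : ∀ x ∈ B, x ≤ n := fun x hx => (Finset.mem_Icc.mp (hBsub hx)).2
      have hnot : (n+1) ∉ B := fun h => by have := hle _ h; omega
      have hsort := sort_insert_max (B := B) (a := n+1)
        (fun x hx => by have := hle x hx; omega) hnot
      have hsup : (insert (n+1) B).sup id = n+1 := by
        rw [Finset.sup_insert]
        have hb : B.sup id ≤ n+1 := Finset.sup_le fun x hx => by
          have := hle x hx; simp only [id]; omega
        simpa using sup_eq_left.mpr hb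
      have hcard : (insert (n+1) B).card = B.card + 1 := Finset.card_insert_of_notMem hnot
      rw [hsort, hcard, hsup, gapProd_append, getLastD_sort_eq_sup]
      rw [show n + 1 - B.sup id - 1 = n - B.sup id from by omega]
      rw [smul_smul]
      congr 1
      ring
    rw [Finset.sum_congr rfl hpt, ← Finset.smul_sum, partI_P r s ψp M hψ n 1 n]

lemma qq_eq (r s φp : ℕ → ℂ) (M η : PowerSeries ℂ)
    (hM0 : PowerSeries.constantCoeff M = 0)
    (hη : η = (1 + M)⁻¹ * substSeries s (PowerSeries.X * (1 + M)))
    (hφ : ∀ m, φp m = PowerSeries.coeff m (1 - η)⁻¹) (n : ℕ) :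
    qq r s M φp n n = ∑ j ∈ range (n+1), thf M η (n-j) • Ep r s M j := by
  have hscal : ∀ k, (∑ j ∈ range (n+1), aa M j k * φp (n-j))
      = ∑ j ∈ range (n+1), ee M j k * thf M η (n-j) := by
    intro k
    have h1 : (∑ j ∈ range (n+1), aa M j k * φp (n-j))
        = PowerSeries.coeff n ((PowerSeries.X * (1 + M)) ^ k * (1 - η)⁻¹) := by
      rw [PowerSeries.coeff_mul, Finset.Nat.sum_antidiagonal_eq_sum_range_succ_mk]
      exact Finset.sum_congr rfl fun j _ => by rw [hφ (n-j), aa_def]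
    have h2 : (∑ j ∈ range (n+1), ee M j k * thf M η (n-j))
        = PowerSeries.coeff n (((PowerSeries.X * (1 + M)) ^ k * (1 + M))
            * ((1 + M)⁻¹ * (1 - η)⁻¹)) := by
      rw [PowerSeries.coeff_mul, Finset.Nat.sum_antidiagonal_eq_sum_range_succ_mk]
      exact Finset.sum_congr rfl fun j _ => by rw [ee_def, thf]
    rw [h1, h2]
    congr 1
    calc (PowerSeries.X * (1 + M)) ^ k * (1 - η)⁻¹
        = ((PowerSeries.X * (1 + M)) ^ k * (1 - η)⁻¹) * ((1 + M) * (1 + M)⁻¹) := by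
          rw [h1M M hM0, mul_one]
      _ = ((PowerSeries.X * (1 + M)) ^ k * (1 + M)) * ((1 + M)⁻¹ * (1 - η)⁻¹) := by ring
  have hext : ∀ j ∈ range (n+1), thf M η (n-j) • Ep r s M j
      = ∑ k ∈ range (n+1), (ee M j k * thf M η (n-j)) • cfAppell r s k := by
    intro j hj
    rw [Ep, Finset.smul_sum]
    rw [Finset.sum_subset (Finset.range_subset_range.mpr
        (by simp only [Finset.mem_range] at hj; omega : j + 1 ≤ n + 1))
      (fun k hk hnk => by
        rw [ee_eq_zero M (by simp only [Finset.mem_range] at hk hnk; omega), zero_smul,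
          smul_zero])]
    exact Finset.sum_congr rfl fun k _ => by rw [smul_smul, mul_comm]
  rw [qq]
  rw [Finset.sum_congr rfl fun k (_ : k ∈ range (n+1)) => by rw [hscal k, Finset.sum_smul]]
  rw [Finset.sum_comm]
  exact (Finset.sum_congr rfl hext).symm

end CFProof

/-- with `M` the unique zero-constant-term solution of `M = R(w(1+M))`,
`η = (1+M)⁻¹·S(w(1+M))`, `φ(xⁿ) = [wⁿ](1−η)⁻¹` and `ψ(xⁿ) = [wⁿ](1+M)`, one has for
every `n` the expansion
`xⁿ = Σ_{k=0}^{n} Σ_{1 ≤ i₁ < ⋯ < iₖ ≤ n} (∏ⱼ ψ(x^{iⱼ−i_{j−1}−1})) φ(x^{n−iₖ}) Aₖ(x)`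
in `ℂ[x]`, the double sum being written as a sum over subsets `B ⊆ {1, …, n}` (listed
in increasing order) with `k = |B|` and `iₖ = max B` (`i₀ = 0`, and the `B = ∅` summand
is `φ(xⁿ)·A₀`). -/

theorem monomial_expansion_in_cfree_appell (r s : ℕ → ℂ) (M η : PowerSeries ℂ)
    (hM0 : PowerSeries.constantCoeff M = 0)
    (hM : M = substSeries r (PowerSeries.X * (1 + M)))
    (hη : η = (1 + M)⁻¹ * substSeries s (PowerSeries.X * (1 + M)))
    (φp ψp : ℕ → ℂ)
    (hφ : ∀ m, φp m = PowerSeries.coeff m (1 - η)⁻¹)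
    (hψ : ∀ m, ψp m = PowerSeries.coeff m (1 + M))
    (n : ℕ) :
    (Polynomial.X : Polynomial ℂ) ^ n =
      ∑ B ∈ (Finset.Icc 1 n).powerset,
        (gapProd ψp 0 (B.sort (· ≤ ·)) * φp (n - B.sup id)) • cfAppell r s B.card := by
  rw [CFProof.partI_Q r s ψp φp M hψ n n, CFProof.qq_eq r s φp M η hM0 hη hφ n]
  exact CFProof.xpow r s M η hM0 hM hη n
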